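/- With the hypotheses of the p ≥ 5 bound, equality N = 2(g-1)/((2/3)d + λ(1/3 - 1/p)) holds if and only if h = ⌊d/3 + 1⌋, l = d + 3 - 3h = λ, and every m_i = p. -/
import Mathlib


/-- In the p ≥ 5 setup, equality N = 2(g-1)/((2/3)d + λ(1/3 - 1/p)) holds
iff h = ⌊d/3 + 1⌋, l = λ, and every period equals p. -/
theorem p_group_equality (p N g d h l : ℕ) (m : Fin l → ℕ)
    (hp : p.Prime) (hp5 : 5 ≤ p)
    (hN : 1 ≤ N) (hg : 2 ≤ g)
    (hmp : ∀ i, p ≤ m i) (hmpow : ∀ i, ∃ k : ℕ, m i = p ^ k)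
    (hd : 1 ≤ d) (hdim : 3 * (h : ℤ) - 3 + l = d)
    (hRH : 2 * ((g : ℚ) - 1) = N * (2 * (h : ℚ) - 2 + ∑ i, (1 - 1 / (m i : ℚ)))) :
    (N : ℚ) = 2 * ((g : ℚ) - 1) /
        ((2 / 3) * (d : ℚ) + ((d % 3 : ℕ) : ℚ) * (1 / 3 - 1 / (p : ℚ))) ↔
      (h = d / 3 + 1 ∧ l = d % 3 ∧ ∀ i, m i = p) := by
  have hp0 : (0:ℚ) < p := by exact_mod_cast hp.pos
  have hp5' : (5:ℚ) ≤ p := by exact_mod_cast hp5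
  have hm0 : ∀ i, (0:ℚ) < m i := fun i => by
    have h1 : 0 < m i := lt_of_lt_of_le hp.pos (hmp i)
    exact_mod_cast h1
  have hNq : (0:ℚ) < N := by exact_mod_cast hN
  have hdim' : 3 * h + l = d + 3 := by omega
  set D : ℚ := (2 / 3) * (d : ℚ) + ((d % 3 : ℕ) : ℚ) * (1 / 3 - 1 / (p : ℚ)) with hDdef
  set T : ℚ := 2 * (h : ℚ) - 2 + ∑ i, (1 - 1 / (m i : ℚ)) with hTdef
  have h13 : 1 / (p:ℚ) ≤ 1 / 3 := by
    rw [div_le_div_iff₀ hp0 (by norm_num)]; linarith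
  have hr0 : (0:ℚ) ≤ ((d % 3 : ℕ) : ℚ) := by positivity
  have hdq1 : (1:ℚ) ≤ d := by exact_mod_cast hd
  have hD : 0 < D := by
    have : (0:ℚ) ≤ ((d % 3 : ℕ) : ℚ) * (1 / 3 - 1 / (p : ℚ)) :=
      mul_nonneg hr0 (by linarith)
    rw [hDdef]; nlinarith
  have step1 : ((N : ℚ) = 2 * ((g : ℚ) - 1) / D) ↔ T = D := by
    rw [eq_div_iff hD.ne', hRH]
    constructor
    · intro hh; exact (mul_left_cancel₀ hNq.ne' hh).symm
    · intro hh; rw [hh]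
  rw [step1]
  set Y : ℚ := ∑ i, (1 / (p:ℚ) - 1 / (m i : ℚ)) with hYdef
  have hY : ∑ i, (1 - 1 / (m i : ℚ)) = (l:ℚ) - l * (1/(p:ℚ)) + Y := by
    rw [hYdef, Finset.sum_sub_distrib, Finset.sum_sub_distrib, Finset.sum_const,
      Finset.sum_const, Finset.card_univ, Fintype.card_fin]
    push_cast; ring
  have hlq : (l:ℚ) + 3 * h = d + 3 := by
    have : ((3*h + l : ℕ):ℚ) = ((d+3:ℕ):ℚ) := by rw [hdim']
    push_cast at this; linarith
  have hdq : (d:ℚ) = 3 * ((d/3 : ℕ):ℚ) + ((d % 3 : ℕ):ℚ) := by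
    exact_mod_cast (Nat.div_add_mod d 3).symm
  set E : ℚ := (((d/3 : ℕ):ℚ) + 1 - (h:ℚ)) * (1 - 3/(p:ℚ)) with hEdef
  have key : T - D = Y + E := by
    have hl2 : (l:ℚ) = 3 * ((d/3 : ℕ):ℚ) + ((d % 3 : ℕ):ℚ) + 3 - 3 * h := by
      linarith [hlq, hdq]
    rw [hTdef, hDdef, hY, hEdef, hl2, hdq]
    field_simp
    ring
  have hY0 : 0 ≤ Y := by
    refine Finset.sum_nonneg fun i _ => sub_nonneg.2 ?_
    exact one_div_le_one_div_of_le hp0 (by exact_mod_cast hmp i)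
  have hhle : h ≤ d / 3 + 1 := by omega
  have h3p : (3:ℚ)/p < 1 := by rw [div_lt_one hp0]; linarith
  have hE0 : 0 ≤ E := by
    have h1 : (h:ℚ) ≤ ((d/3 : ℕ):ℚ) + 1 := by exact_mod_cast hhle
    exact mul_nonneg (by linarith) (by linarith)
  constructor
  · intro hTD
    have hsum0 : Y + E = 0 := by rw [← key, hTD]; ring
    have hYe : Y = 0 := by linarith
    have hEe : E = 0 := by linarith
    have hheq : h = d / 3 + 1 := by
      rcases mul_eq_zero.1 hEe with h1 | h2
      · have : (h:ℚ) = ((d/3 : ℕ):ℚ) + 1 := by linarith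
        exact_mod_cast this
      · linarith
    refine ⟨hheq, by omega, fun i => ?_⟩
    have := (Finset.sum_eq_zero_iff_of_nonneg (fun i _ =>
      sub_nonneg.2 (one_div_le_one_div_of_le hp0 (by exact_mod_cast hmp i)))).1 hYe i
      (Finset.mem_univ i)
    have h2 : (1:ℚ) / (m i : ℚ) = 1 / (p:ℚ) := by linarith
    rw [div_eq_div_iff (hm0 i).ne' hp0.ne'] at h2
    have h3 : ((m i : ℕ):ℚ) = (p:ℚ) := by linarith
    exact_mod_cast h3
  · rintro ⟨hh, hl, hm⟩
    have hYe : Y = 0 := by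
      rw [hYdef]
      apply Finset.sum_eq_zero
      intro i _
      rw [hm i]; ring
    have hEe : E = 0 := by
      rw [hEdef]
      have : (h:ℚ) = ((d/3 : ℕ):ℚ) + 1 := by rw [hh]; push_cast; ring
      rw [this]; ring
    linarith [key, hYe, hEe]
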